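/- For k,ℓ ≥ 1 and n ≥ k+ℓ+1, the maximum number of matches of MMP(k,0,ℓ,0) over σ ∈ S_n(132) is n-k-ℓ, and the number of σ ∈ S_n(132) achieving exactly n-k-ℓ matches is the Catalan number C_ℓ. -/

import Mathlib

open Finset

/-- σ avoids the classical pattern 132. -/
def avoids132 {n : ℕ} (σ : Equiv.Perm (Fin n)) : Prop :=
  ¬ ∃ i j k : Fin n, i < j ∧ j < k ∧ σ i < σ k ∧ σ k < σ j

/-- position `i` matches the quadrant marked mesh pattern MMP(a,b,c,d) in σ. -/
def mmpMatch {n : ℕ} (a b c d : ℕ) (σ : Equiv.Perm (Fin n)) (i : Fin n) : Prop :=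
  a ≤ (Finset.univ.filter fun j => i < j ∧ σ i < σ j).card ∧
  b ≤ (Finset.univ.filter fun j => j < i ∧ σ i < σ j).card ∧
  c ≤ (Finset.univ.filter fun j => j < i ∧ σ j < σ i).card ∧
  d ≤ (Finset.univ.filter fun j => i < j ∧ σ j < σ i).card

/-- the number of positions of σ matching MMP(a,b,c,d). -/
noncomputable def mmp {n : ℕ} (a b c d : ℕ) (σ : Equiv.Perm (Fin n)) : ℕ :=
  Nat.card {i : Fin n // mmpMatch a b c d σ i}

open Equiv

set_option maxHeartbeats 1000000

section Glue
variable {m : ℕ}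

/-- forward function gluing head perm τ (on top values), max at p, tail perm ρ (on low values) -/
def gf (p : Fin (m+1)) (τ : Perm (Fin (p:ℕ))) (ρ : Perm (Fin (m - (p:ℕ))))
    (j : Fin (m+1)) : Fin (m+1) :=
  if h : (j:ℕ) < (p:ℕ) then
    ⟨m - (p:ℕ) + ((τ ⟨(j:ℕ), h⟩ : Fin (p:ℕ)) : ℕ), by
      have := (τ ⟨(j:ℕ), h⟩).isLt; have := p.is_le; omega⟩
  else if h2 : (j:ℕ) = (p:ℕ) then ⟨m, by omega⟩
  else ⟨((ρ ⟨(j:ℕ) - ((p:ℕ)+1), by have := j.isLt; omega⟩ : Fin (m - (p:ℕ))) : ℕ), by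
    have := (ρ ⟨(j:ℕ) - ((p:ℕ)+1), by have := j.isLt; omega⟩).isLt; omega⟩

variable {p : Fin (m+1)} {τ : Perm (Fin (p:ℕ))} {ρ : Perm (Fin (m - (p:ℕ)))}

lemma gf_lt {j : Fin (m+1)} (h : (j:ℕ) < (p:ℕ)) :
    (gf p τ ρ j : ℕ) = m - (p:ℕ) + (τ ⟨(j:ℕ), h⟩ : ℕ) := by
  simp [gf, h]

lemma gf_eq {j : Fin (m+1)} (h : (j:ℕ) = (p:ℕ)) : (gf p τ ρ j : ℕ) = m := by
  simp [gf, h]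

lemma gf_gt {j : Fin (m+1)} (h : (p:ℕ) < (j:ℕ))
    (hb : (j:ℕ) - ((p:ℕ)+1) < m - (p:ℕ)) :
    (gf p τ ρ j : ℕ) = (ρ ⟨(j:ℕ) - ((p:ℕ)+1), hb⟩ : ℕ) := by
  have h1 : ¬ ((j:ℕ) < (p:ℕ)) := by omega
  have h2 : ¬ ((j:ℕ) = (p:ℕ)) := by omega
  simp [gf, h1, h2]

lemma gf_inj : Function.Injective (gf p τ ρ) := by
  intro a b hab
  have hple := p.is_le
  have ha := a.isLt
  have hb := b.isLt
  have hval : (gf p τ ρ a : ℕ) = (gf p τ ρ b : ℕ) := by rw [hab]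
  rcases lt_trichotomy (a:ℕ) (p:ℕ) with h1 | h1 | h1 <;>
    rcases lt_trichotomy (b:ℕ) (p:ℕ) with h2 | h2 | h2
  · -- head head
    rw [gf_lt h1, gf_lt h2] at hval
    have : τ ⟨(a:ℕ), h1⟩ = τ ⟨(b:ℕ), h2⟩ := Fin.ext (by omega)
    have := τ.injective this
    exact Fin.ext (by simpa [Fin.ext_iff] using this)
  · have := (τ ⟨(a:ℕ), h1⟩).isLt
    rw [gf_lt h1, gf_eq h2] at hval; omega
  · have := (τ ⟨(a:ℕ), h1⟩).isLt
    have hb2 : (b:ℕ) - ((p:ℕ)+1) < m - (p:ℕ) := by omega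
    have := (ρ ⟨(b:ℕ) - ((p:ℕ)+1), hb2⟩).isLt
    rw [gf_lt h1, gf_gt h2 hb2] at hval; omega
  · have := (τ ⟨(b:ℕ), h2⟩).isLt
    rw [gf_eq h1, gf_lt h2] at hval; omega
  · exact Fin.ext (by omega)
  · have hb2 : (b:ℕ) - ((p:ℕ)+1) < m - (p:ℕ) := by omega
    have := (ρ ⟨(b:ℕ) - ((p:ℕ)+1), hb2⟩).isLt
    rw [gf_eq h1, gf_gt h2 hb2] at hval; omega
  · have ha2 : (a:ℕ) - ((p:ℕ)+1) < m - (p:ℕ) := by omega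
    have := (ρ ⟨(a:ℕ) - ((p:ℕ)+1), ha2⟩).isLt
    have := (τ ⟨(b:ℕ), h2⟩).isLt
    rw [gf_gt h1 ha2, gf_lt h2] at hval; omega
  · have ha2 : (a:ℕ) - ((p:ℕ)+1) < m - (p:ℕ) := by omega
    have := (ρ ⟨(a:ℕ) - ((p:ℕ)+1), ha2⟩).isLt
    rw [gf_gt h1 ha2, gf_eq h2] at hval; omega
  · have ha2 : (a:ℕ) - ((p:ℕ)+1) < m - (p:ℕ) := by omega
    have hb2 : (b:ℕ) - ((p:ℕ)+1) < m - (p:ℕ) := by omega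
    rw [gf_gt h1 ha2, gf_gt h2 hb2] at hval
    have : ρ ⟨(a:ℕ) - ((p:ℕ)+1), ha2⟩ = ρ ⟨(b:ℕ) - ((p:ℕ)+1), hb2⟩ := Fin.ext hval
    have := ρ.injective this
    rw [Fin.ext_iff] at this
    exact Fin.ext (by simp at this; omega)

noncomputable def glue (p : Fin (m+1)) (τ : Perm (Fin (p:ℕ))) (ρ : Perm (Fin (m - (p:ℕ)))) :
    Perm (Fin (m+1)) :=
  Equiv.ofBijective (gf p τ ρ) ((Finite.injective_iff_bijective).1 gf_inj)

lemma glue_apply (j : Fin (m+1)) : glue p τ ρ j = gf p τ ρ j := rfl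

lemma glue_avoids (hτ : avoids132 τ) (hρ : avoids132 ρ) : avoids132 (glue p τ ρ) := by
  rintro ⟨i, j, k, hij, hjk, h1, h2⟩
  have hple := p.is_le
  rw [Fin.lt_def] at hij hjk h1 h2
  simp only [glue_apply] at h1 h2
  have hi := i.isLt; have hj := j.isLt; have hk := k.isLt
  rcases lt_trichotomy (i:ℕ) (p:ℕ) with hi1 | hi1 | hi1
  · rcases lt_trichotomy (j:ℕ) (p:ℕ) with hj1 | hj1 | hj1
    · rcases lt_trichotomy (k:ℕ) (p:ℕ) with hk1 | hk1 | hk1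
      · -- all head : pattern in τ
        rw [gf_lt hi1, gf_lt hk1] at h1
        rw [gf_lt hk1, gf_lt hj1] at h2
        exact hτ ⟨⟨(i:ℕ), hi1⟩, ⟨(j:ℕ), hj1⟩, ⟨(k:ℕ), hk1⟩, Fin.mk_lt_mk.2 hij,
          Fin.mk_lt_mk.2 hjk, Fin.lt_def.2 (by omega), Fin.lt_def.2 (by omega)⟩
      · -- i,j head, k = p : σ k = m > σ j, contradiction with h2
        have := (τ ⟨(j:ℕ), hj1⟩).isLt
        rw [gf_eq hk1] at h2; rw [gf_lt hj1] at h2; omega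
      · -- k tail : σ i ≥ m - p > σ k
        have hkb : (k:ℕ) - ((p:ℕ)+1) < m - (p:ℕ) := by omega
        have := (ρ ⟨(k:ℕ) - ((p:ℕ)+1), hkb⟩).isLt
        rw [gf_lt hi1, gf_gt hk1 hkb] at h1; omega
    · -- j = p, so k tail, i head : σ i ≥ m-p > σ k
      have hk1 : (p:ℕ) < (k:ℕ) := by omega
      have hkb : (k:ℕ) - ((p:ℕ)+1) < m - (p:ℕ) := by omega
      have := (ρ ⟨(k:ℕ) - ((p:ℕ)+1), hkb⟩).isLt
      rw [gf_lt hi1, gf_gt hk1 hkb] at h1; omega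
    · -- j tail, k tail, i head
      have hk1 : (p:ℕ) < (k:ℕ) := by omega
      have hkb : (k:ℕ) - ((p:ℕ)+1) < m - (p:ℕ) := by omega
      have := (ρ ⟨(k:ℕ) - ((p:ℕ)+1), hkb⟩).isLt
      rw [gf_lt hi1, gf_gt hk1 hkb] at h1; omega
  · -- i = p : σ i = m maximal
    rw [gf_eq hi1] at h1
    have hk1 : (p:ℕ) < (k:ℕ) := by omega
    have hkb : (k:ℕ) - ((p:ℕ)+1) < m - (p:ℕ) := by omega
    have := (ρ ⟨(k:ℕ) - ((p:ℕ)+1), hkb⟩).isLt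
    rw [gf_gt hk1 hkb] at h1; omega
  · -- all tail : pattern in ρ
    have hj1 : (p:ℕ) < (j:ℕ) := by omega
    have hk1 : (p:ℕ) < (k:ℕ) := by omega
    have hib : (i:ℕ) - ((p:ℕ)+1) < m - (p:ℕ) := by omega
    have hjb : (j:ℕ) - ((p:ℕ)+1) < m - (p:ℕ) := by omega
    have hkb : (k:ℕ) - ((p:ℕ)+1) < m - (p:ℕ) := by omega
    rw [gf_gt hi1 hib, gf_gt hk1 hkb] at h1
    rw [gf_gt hk1 hkb, gf_gt hj1 hjb] at h2
    exact hρ ⟨⟨_, hib⟩, ⟨_, hjb⟩, ⟨_, hkb⟩, Fin.mk_lt_mk.2 (by omega),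
      Fin.mk_lt_mk.2 (by omega), Fin.lt_def.2 (by omega), Fin.lt_def.2 (by omega)⟩

end Glue

/-- count of positions with value below σ i -/
lemma card_val_lt {n : ℕ} (σ : Equiv.Perm (Fin n)) (i : Fin n) :
    (univ.filter fun j => σ j < σ i).card = (σ i : ℕ) := by
  have h : (univ.filter fun j => σ j < σ i).image (fun j => ((σ j : Fin n) : ℕ))
      = Finset.range (σ i : ℕ) := by
    ext v
    simp only [mem_image, mem_filter, mem_univ, true_and, Finset.mem_range]
    constructor
    · rintro ⟨j, hj, rfl⟩; exact hj
    · intro hv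
      refine ⟨σ.symm ⟨v, lt_trans hv (σ i).isLt⟩, ?_, ?_⟩ <;>
        simp [Fin.lt_def, hv]
  have hinj : Set.InjOn (fun j => ((σ j : Fin n) : ℕ)) (univ.filter fun j => σ j < σ i) := by
    intro a _ b _ hab
    exact σ.injective (Fin.ext hab)
  rw [← Finset.card_image_of_injOn hinj, h, Finset.card_range]

lemma card_val_gt {n : ℕ} (σ : Equiv.Perm (Fin n)) (i : Fin n) :
    (univ.filter fun j => σ i < σ j).card = n - 1 - (σ i : ℕ) := by
  have h : (univ.filter fun j => σ i < σ j).image (fun j => ((σ j : Fin n) : ℕ))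
      = Finset.Ico ((σ i : ℕ) + 1) n := by
    ext v
    simp only [mem_image, mem_filter, mem_univ, true_and, Finset.mem_Ico]
    constructor
    · rintro ⟨j, hj, rfl⟩; exact ⟨hj, (σ j).isLt⟩
    · rintro ⟨hv, hvn⟩
      refine ⟨σ.symm ⟨v, hvn⟩, ?_, ?_⟩ <;> simp [Fin.lt_def] <;> omega
  have hinj : Set.InjOn (fun j => ((σ j : Fin n) : ℕ)) (univ.filter fun j => σ i < σ j) := by
    intro a _ b _ hab
    exact σ.injective (Fin.ext hab)
  rw [← Finset.card_image_of_injOn hinj, h, Nat.card_Ico]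
  omega

section Surj
variable {m : ℕ}

noncomputable def Phi (m : ℕ) :
    (Σ p : Fin (m+1), {τ : Perm (Fin (p:ℕ)) // avoids132 τ} ×
      {ρ : Perm (Fin (m - (p:ℕ))) // avoids132 ρ}) → {σ : Perm (Fin (m+1)) // avoids132 σ} :=
  fun x => ⟨glue x.1 x.2.1.1 x.2.2.1, glue_avoids x.2.1.2 x.2.2.2⟩

lemma Phi_injective : Function.Injective (Phi m) := by
  rintro ⟨p, ⟨τ, hτ⟩, ⟨ρ, hρ⟩⟩ ⟨q, ⟨τ', hτ'⟩, ⟨ρ', hρ'⟩⟩ h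
  simp only [Phi, Subtype.mk.injEq] at h
  have hple := p.is_le
  have hqle := q.is_le
  have hpq : p = q := by
    apply Fin.ext
    by_contra hne
    have hval : ((glue p τ ρ) p : ℕ) = ((glue q τ' ρ') p : ℕ) := by rw [h]
    simp only [glue_apply] at hval
    rw [gf_eq rfl] at hval
    rcases lt_or_gt_of_ne hne with h1 | h1
    · have := (τ' ⟨(p:ℕ), h1⟩).isLt
      rw [gf_lt h1] at hval; omega
    · have hb : (p:ℕ) - ((q:ℕ)+1) < m - (q:ℕ) := by omega
      have := (ρ' ⟨(p:ℕ) - ((q:ℕ)+1), hb⟩).isLt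
      rw [gf_gt h1 hb] at hval; omega
  subst hpq
  have happ := Equiv.ext_iff.1 h
  refine congrArg (Sigma.mk p) ?_
  simp only [Prod.mk.injEq, Subtype.mk.injEq]
  refine ⟨?_, ?_⟩
  · apply Equiv.ext
    intro a
    have ha : ((⟨(a:ℕ), by have := a.isLt; omega⟩ : Fin (m+1)) : ℕ) < (p:ℕ) := a.isLt
    have hval : ((glue p τ ρ) ⟨(a:ℕ), by have := a.isLt; omega⟩ : ℕ)
        = ((glue p τ' ρ') ⟨(a:ℕ), by have := a.isLt; omega⟩ : ℕ) :=
      congrArg Fin.val (happ _)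
    simp only [glue_apply] at hval
    rw [gf_lt ha, gf_lt ha] at hval
    simp only [Fin.eta] at hval
    exact Fin.ext (by omega)
  · apply Equiv.ext
    intro b
    have hblt := b.isLt
    have hval : ((glue p τ ρ) ⟨(p:ℕ)+1+(b:ℕ), by have := b.isLt; omega⟩ : ℕ)
        = ((glue p τ' ρ') ⟨(p:ℕ)+1+(b:ℕ), by have := b.isLt; omega⟩ : ℕ) :=
      congrArg Fin.val (happ _)
    simp only [glue_apply] at hval
    have hgt : (p:ℕ) < ((⟨(p:ℕ)+1+(b:ℕ), by have := b.isLt; omega⟩ : Fin (m+1)) : ℕ) := by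
      show (p:ℕ) < (p:ℕ)+1+(b:ℕ)
      omega
    have hb : (((⟨(p:ℕ)+1+(b:ℕ), by have := b.isLt; omega⟩ : Fin (m+1)) : ℕ)) - ((p:ℕ)+1)
        < m - (p:ℕ) := by
      show ((p:ℕ)+1+(b:ℕ)) - ((p:ℕ)+1) < m - (p:ℕ)
      omega
    rw [gf_gt (τ := τ) (ρ := ρ) hgt hb] at hval
    rw [gf_gt (τ := τ') (ρ := ρ') hgt hb] at hval
    have hbeq : (⟨((⟨(p:ℕ)+1+(b:ℕ), by have := b.isLt; omega⟩ : Fin (m+1)) : ℕ) - ((p:ℕ)+1), hb⟩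
        : Fin (m - (p:ℕ))) = b := by
      apply Fin.ext
      show ((p:ℕ)+1+(b:ℕ)) - ((p:ℕ)+1) = (b:ℕ)
      omega
    simp only [hbeq] at hval
    exact Fin.ext hval

lemma Phi_surjective : Function.Surjective (Phi m) := by
  rintro ⟨σ, hσ⟩
  obtain ⟨p, hσp⟩ : ∃ p : Fin (m+1), σ p = ⟨m, Nat.lt_succ_self m⟩ :=
    ⟨σ.symm _, Equiv.apply_symm_apply σ _⟩
  have hple := p.is_le
  have hne : ∀ x : Fin (m+1), x ≠ p → (σ x : ℕ) < m := by
    intro x hx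
    have h1 : σ x ≠ ⟨m, Nat.lt_succ_self m⟩ := by
      intro hc
      exact hx (σ.injective (hc.trans hσp.symm))
    have := (σ x).isLt
    have : (σ x : ℕ) ≠ m := fun hc => h1 (Fin.ext hc)
    omega
  have S1 : ∀ x y : Fin (m+1), (x:ℕ) < (p:ℕ) → (p:ℕ) < (y:ℕ) → σ y < σ x := by
    intro x y hx hy
    by_contra hc
    have hxy : σ x ≠ σ y := fun hc2 => by
      have := σ.injective hc2
      subst this; omega
    have h1 : σ x < σ y := lt_of_le_of_ne (not_lt.1 hc) hxy
    exact hσ ⟨x, p, y, Fin.lt_def.2 hx, Fin.lt_def.2 hy, h1,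
      Fin.lt_def.2 (by rw [hσp]; exact hne y (by intro hc2; subst hc2; omega))⟩
  have S2 : ∀ x : Fin (m+1), (x:ℕ) < (p:ℕ) → m - (p:ℕ) ≤ (σ x : ℕ) := by
    intro x hx
    have hsub : Finset.Ioi p ⊆ univ.filter fun j => σ j < σ x := by
      intro j hj
      simp only [Finset.mem_Ioi] at hj
      simp only [mem_filter, mem_univ, true_and]
      exact S1 x j hx (Fin.lt_def.1 hj)
    have := Finset.card_le_card hsub
    rw [Fin.card_Ioi, card_val_lt] at this
    omega
  have S3 : ∀ y : Fin (m+1), (p:ℕ) < (y:ℕ) → (σ y : ℕ) < m - (p:ℕ) := by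
    intro y hy
    have hsub : Finset.Iic p ⊆ univ.filter fun j => σ y < σ j := by
      intro x hx
      simp only [Finset.mem_Iic] at hx
      simp only [mem_filter, mem_univ, true_and]
      rcases lt_or_eq_of_le hx with h1 | h1
      · exact S1 x y (Fin.lt_def.1 h1) hy
      · subst h1
        rw [hσp]
        exact Fin.lt_def.2 (hne y (by intro hc; subst hc; omega))
    have := Finset.card_le_card hsub
    rw [Fin.card_Iic, card_val_gt] at this
    omega
  -- head permutation
  have hfinj : Function.Injective (fun a : Fin (p:ℕ) =>
      (⟨(σ ⟨(a:ℕ), by have := a.isLt; omega⟩ : ℕ) - (m - (p:ℕ)), by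
        have h1 := S2 ⟨(a:ℕ), by have := a.isLt; omega⟩ a.isLt
        have h2 := hne ⟨(a:ℕ), by have := a.isLt; omega⟩
          (by intro hc; have := congrArg Fin.val hc; simp only [Fin.val_mk] at this; omega)
        omega⟩ : Fin (p:ℕ))) := by
    intro a b hab
    simp only [Fin.mk.injEq] at hab
    have h2a := S2 ⟨(a:ℕ), by have := a.isLt; omega⟩ a.isLt
    have h2b := S2 ⟨(b:ℕ), by have := b.isLt; omega⟩ b.isLt
    have : σ ⟨(a:ℕ), by have := a.isLt; omega⟩ = σ ⟨(b:ℕ), by have := b.isLt; omega⟩ :=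
      Fin.ext (by omega)
    have := σ.injective this
    exact Fin.ext (by simpa [Fin.ext_iff] using this)
  obtain ⟨τ, hτspec⟩ : ∃ τ : Perm (Fin (p:ℕ)), ∀ a : Fin (p:ℕ),
      (τ a : ℕ) = (σ ⟨(a:ℕ), by have := a.isLt; omega⟩ : ℕ) - (m - (p:ℕ)) :=
    ⟨Equiv.ofBijective _ ((Finite.injective_iff_bijective).1 hfinj), fun a => rfl⟩
  -- tail permutation
  have hginj : Function.Injective (fun b : Fin (m - (p:ℕ)) =>
      (⟨(σ ⟨(p:ℕ)+1+(b:ℕ), by have := b.isLt; omega⟩ : ℕ), by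
        exact S3 ⟨(p:ℕ)+1+(b:ℕ), by have := b.isLt; omega⟩
          (by show (p:ℕ) < (p:ℕ)+1+(b:ℕ); omega)⟩
        : Fin (m - (p:ℕ)))) := by
    intro a b hab
    simp only [Fin.mk.injEq] at hab
    have h1 : σ ⟨(p:ℕ)+1+(a:ℕ), by have := a.isLt; omega⟩
        = σ ⟨(p:ℕ)+1+(b:ℕ), by have := b.isLt; omega⟩ := Fin.ext hab
    have h2 := σ.injective h1
    have h3 : (p:ℕ)+1+(a:ℕ) = (p:ℕ)+1+(b:ℕ) := congrArg Fin.val h2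
    exact Fin.ext (by omega)
  obtain ⟨ρ, hρspec⟩ : ∃ ρ : Perm (Fin (m - (p:ℕ))), ∀ b : Fin (m - (p:ℕ)),
      (ρ b : ℕ) = (σ ⟨(p:ℕ)+1+(b:ℕ), by have := b.isLt; omega⟩ : ℕ) :=
    ⟨Equiv.ofBijective _ ((Finite.injective_iff_bijective).1 hginj), fun b => rfl⟩
  -- τ avoids
  have hτav : avoids132 τ := by
    rintro ⟨a, b, c, hab, hbc, h1, h2⟩
    rw [Fin.lt_def] at hab hbc h1 h2
    rw [hτspec, hτspec] at h1 h2
    have h2a := S2 ⟨(a:ℕ), by have := a.isLt; omega⟩ a.isLt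
    have h2b := S2 ⟨(b:ℕ), by have := b.isLt; omega⟩ b.isLt
    have h2c := S2 ⟨(c:ℕ), by have := c.isLt; omega⟩ c.isLt
    exact hσ ⟨⟨(a:ℕ), by have := a.isLt; omega⟩, ⟨(b:ℕ), by have := b.isLt; omega⟩,
      ⟨(c:ℕ), by have := c.isLt; omega⟩, Fin.mk_lt_mk.2 hab, Fin.mk_lt_mk.2 hbc,
      Fin.lt_def.2 (by omega), Fin.lt_def.2 (by omega)⟩
  -- ρ avoids
  have hρav : avoids132 ρ := by
    rintro ⟨a, b, c, hab, hbc, h1, h2⟩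
    rw [Fin.lt_def] at hab hbc h1 h2
    rw [hρspec, hρspec] at h1 h2
    exact hσ ⟨⟨(p:ℕ)+1+(a:ℕ), by have := a.isLt; omega⟩,
      ⟨(p:ℕ)+1+(b:ℕ), by have := b.isLt; omega⟩,
      ⟨(p:ℕ)+1+(c:ℕ), by have := c.isLt; omega⟩, Fin.mk_lt_mk.2 (by omega),
      Fin.mk_lt_mk.2 (by omega), Fin.lt_def.2 (by omega), Fin.lt_def.2 (by omega)⟩
  refine ⟨⟨p, ⟨τ, hτav⟩, ⟨ρ, hρav⟩⟩, ?_⟩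
  simp only [Phi, Subtype.mk.injEq]
  apply Equiv.ext
  intro j
  apply Fin.ext
  have hjlt := j.isLt
  rcases lt_trichotomy (j:ℕ) (p:ℕ) with h1 | h1 | h1
  · rw [show ((glue p τ ρ) j : ℕ) = _ from gf_lt h1, hτspec]
    simp only [Fin.eta]
    have := S2 j h1
    omega
  · rw [show ((glue p τ ρ) j : ℕ) = _ from gf_eq h1]
    have : j = p := Fin.ext h1
    subst this
    rw [hσp]
  · have hb : (j:ℕ) - ((p:ℕ)+1) < m - (p:ℕ) := by omega
    rw [show ((glue p τ ρ) j : ℕ) = _ from gf_gt h1 hb, hρspec]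
    have hpos : (⟨(p:ℕ)+1+(((⟨(j:ℕ) - ((p:ℕ)+1), hb⟩ : Fin (m - (p:ℕ)))):ℕ), by simp; omega⟩
        : Fin (m+1)) = j := Fin.ext (by simp; omega)
    rw [hpos]

end Surj

theorem card_avoids132 (m : ℕ) :
    Nat.card {σ : Perm (Fin m) // avoids132 σ} = catalan m := by
  induction m using Nat.strong_induction_on with
  | _ m ih =>
    match m, ih with
    | 0, _ =>
      have h0 : ∀ σ : Perm (Fin 0), avoids132 σ := fun σ h => by
        obtain ⟨i, _⟩ := h; exact i.elim0
      rw [Nat.card_congr (Equiv.subtypeUnivEquiv h0), Nat.card_eq_fintype_card,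
        Fintype.card_perm]
      simp [catalan_zero]
    | m+1, ih =>
      classical
      have hbij : Function.Bijective (Phi m) := ⟨Phi_injective, Phi_surjective⟩
      rw [← Nat.card_congr (Equiv.ofBijective _ hbij)]
      rw [Nat.card_eq_fintype_card, Fintype.card_sigma, catalan_succ]
      refine Finset.sum_congr rfl fun p _ => ?_
      rw [Fintype.card_prod, ← Nat.card_eq_fintype_card (α := {τ : Perm (Fin (p:ℕ)) // avoids132 τ}),
        ← Nat.card_eq_fintype_card (α := {ρ : Perm (Fin (m - (p:ℕ))) // avoids132 ρ}),
        ih (p:ℕ) (by omega), ih (m - (p:ℕ)) (by omega)]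

instance {n : ℕ} (a b c d : ℕ) (σ : Equiv.Perm (Fin n)) :
    DecidablePred (mmpMatch a b c d σ) := fun i => by
  unfold mmpMatch; infer_instance

lemma mmp_eq_card {n : ℕ} (a b c d : ℕ) (σ : Equiv.Perm (Fin n)) :
    mmp a b c d σ = (univ.filter (mmpMatch a b c d σ)).card := by
  rw [mmp, Nat.card_eq_fintype_card, Fintype.card_subtype]

lemma card_filter_interval (l u n : ℕ) (hu : u ≤ n) :
    (univ.filter fun i : Fin n => l ≤ (i:ℕ) ∧ (i:ℕ) < u).card = u - l := by
  have h : (univ.filter fun i : Fin n => l ≤ (i:ℕ) ∧ (i:ℕ) < u).image Fin.val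
      = Finset.Ico l u := by
    ext v
    simp only [mem_image, mem_filter, mem_univ, true_and, Finset.mem_Ico]
    constructor
    · rintro ⟨i, hi, rfl⟩; exact hi
    · rintro ⟨h1, h2⟩; exact ⟨⟨v, lt_of_lt_of_le h2 hu⟩, ⟨h1, h2⟩, rfl⟩
  rw [← Finset.card_image_of_injOn (Fin.val_injective.injOn), h, Nat.card_Ico]

lemma card_filter_le_perm {n l : ℕ} (σ : Equiv.Perm (Fin n)) :
    (univ.filter fun j => l ≤ (σ j : ℕ)).card = n - l := by
  have h : (univ.filter fun j => l ≤ (σ j : ℕ)).image (fun j => (σ j : ℕ))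
      = Finset.Ico l n := by
    ext v
    simp only [mem_image, mem_filter, mem_univ, true_and, Finset.mem_Ico]
    constructor
    · rintro ⟨j, hj, rfl⟩; exact ⟨hj, (σ j).isLt⟩
    · rintro ⟨h1, h2⟩
      refine ⟨σ.symm ⟨v, h2⟩, ?_, ?_⟩ <;> simp [h1]
  have hinj : Set.InjOn (fun j => ((σ j : Fin n) : ℕ)) (univ.filter fun j => l ≤ (σ j : ℕ)) :=
    fun a _ b _ hab => σ.injective (Fin.ext hab)
  rw [← Finset.card_image_of_injOn hinj, h, Nat.card_Ico]

lemma card_filter_le_val (n l : ℕ) :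
    (univ.filter fun j : Fin n => l ≤ (j:ℕ)).card = n - l := by
  have h : (univ.filter fun j : Fin n => l ≤ (j:ℕ)).image Fin.val = Finset.Ico l n := by
    ext v
    simp only [mem_image, mem_filter, mem_univ, true_and, Finset.mem_Ico]
    constructor
    · rintro ⟨j, hj, rfl⟩; exact ⟨hj, j.isLt⟩
    · rintro ⟨h1, h2⟩; exact ⟨⟨v, h2⟩, h1, rfl⟩
  rw [← Finset.card_image_of_injOn (Fin.val_injective.injOn), h, Nat.card_Ico]

section Main
variable {n k l : ℕ} {σ : Equiv.Perm (Fin n)}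

lemma match_bounds {i : Fin n} (h : mmpMatch k 0 l 0 σ i) :
    l ≤ (i:ℕ) ∧ (i:ℕ) + k < n := by
  obtain ⟨h1, -, h3, -⟩ := h
  have hi := i.isLt
  constructor
  · have hsub : (univ.filter fun j => j < i ∧ σ j < σ i) ⊆ Finset.Iio i := by
      intro j hj
      simp only [mem_filter] at hj
      exact Finset.mem_Iio.2 hj.2.1
    have := Finset.card_le_card hsub
    rw [Fin.card_Iio] at this
    omega
  · have hsub : (univ.filter fun j => i < j ∧ σ i < σ j) ⊆ Finset.Ioi i := by
      intro j hj
      simp only [mem_filter] at hj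
      exact Finset.mem_Ioi.2 hj.2.1
    have := Finset.card_le_card hsub
    rw [Fin.card_Ioi] at this
    omega

lemma match_val_ge {i : Fin n} (h : mmpMatch k 0 l 0 σ i) : l ≤ (σ i : ℕ) := by
  obtain ⟨-, -, h3, -⟩ := h
  have hsub : (univ.filter fun j => j < i ∧ σ j < σ i) ⊆ univ.filter fun j => σ j < σ i := by
    intro j hj
    simp only [mem_filter, mem_univ, true_and] at hj ⊢
    exact hj.2
  have := Finset.card_le_card hsub
  rw [card_val_lt] at this
  omega

theorem mmp_le_max (σ : Equiv.Perm (Fin n)) : mmp k 0 l 0 σ ≤ n - k - l := by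
  rw [mmp_eq_card]
  have hle : (univ.filter (mmpMatch k 0 l 0 σ)).card ≤ (Finset.Ico l (n - k)).card := by
    apply Finset.card_le_card_of_injOn Fin.val
    · intro i hi
      simp only [mem_coe, mem_filter, mem_univ, true_and] at hi
      have := match_bounds hi
      exact Finset.mem_Ico.2 ⟨this.1, by omega⟩
    · exact Fin.val_injective.injOn.mono (Set.subset_univ _)
  rw [Nat.card_Ico] at hle
  omega

theorem all_match (hm : mmp k 0 l 0 σ = n - k - l) (hn : k + l + 1 ≤ n) :
    ∀ i : Fin n, l ≤ (i:ℕ) → (i:ℕ) < n - k → mmpMatch k 0 l 0 σ i := by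
  have himg : (univ.filter (mmpMatch k 0 l 0 σ)).image Fin.val = Finset.Ico l (n - k) := by
    apply Finset.eq_of_subset_of_card_le
    · intro v hv
      simp only [mem_image, mem_filter, mem_univ, true_and] at hv
      obtain ⟨i, hi, rfl⟩ := hv
      have := match_bounds hi
      exact Finset.mem_Ico.2 ⟨this.1, by omega⟩
    · rw [Nat.card_Ico, Finset.card_image_of_injOn (Fin.val_injective.injOn),
        ← mmp_eq_card, hm]
  intro i h1 h2
  have hv : (i:ℕ) ∈ Finset.Ico l (n - k) := Finset.mem_Ico.2 ⟨h1, h2⟩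
  rw [← himg] at hv
  simp only [mem_image, mem_filter, mem_univ, true_and] at hv
  obtain ⟨i', hi', hii⟩ := hv
  rwa [Fin.val_injective hii] at hi'

theorem fixes_of_max (hk : 1 ≤ k) (hl : 1 ≤ l) (hn : k + l + 1 ≤ n)
    (hσ : avoids132 σ) (hall : ∀ i : Fin n, l ≤ (i:ℕ) → (i:ℕ) < n - k → mmpMatch k 0 l 0 σ i) :
    ∀ i : Fin n, l ≤ (i:ℕ) → σ i = i := by
  set z : Fin n := ⟨n - k - 1, by omega⟩ with hz
  have hzval : (z:ℕ) = n - k - 1 := rfl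
  have hzm : mmpMatch k 0 l 0 σ z := hall z (by omega) (by omega)
  have L2 : ∀ j : Fin n, (z:ℕ) < (j:ℕ) → σ z < σ j := by
    have hsub : (univ.filter fun j => z < j ∧ σ z < σ j) ⊆ Finset.Ioi z := by
      intro j hj
      simp only [mem_filter] at hj
      exact Finset.mem_Ioi.2 hj.2.1
    have heq : (univ.filter fun j => z < j ∧ σ z < σ j) = Finset.Ioi z := by
      apply Finset.eq_of_subset_of_card_le hsub
      rw [Fin.card_Ioi]
      have := hzm.1
      omega
    intro j hj
    have : j ∈ Finset.Ioi z := Finset.mem_Ioi.2 (Fin.lt_def.2 hj)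
    rw [← heq] at this
    simp only [mem_filter] at this
    exact this.2.2
  have L3 : ∀ j : Fin n, l ≤ (j:ℕ) → l ≤ (σ j : ℕ) := by
    intro j hj
    rcases lt_or_ge (j:ℕ) (n - k) with h | h
    · exact match_val_ge (hall j hj h)
    · have h1 : (z:ℕ) < (j:ℕ) := by omega
      have h2 := Fin.lt_def.1 (L2 j h1)
      have h3 := match_val_ge hzm
      omega
  have L4 : ∀ j : Fin n, (j:ℕ) < l → (σ j : ℕ) < l := by
    have hsub : (univ.filter fun j : Fin n => l ≤ (j:ℕ))
        ⊆ univ.filter fun j => l ≤ (σ j : ℕ) := by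
      intro j hj
      simp only [mem_filter, mem_univ, true_and] at hj ⊢
      exact L3 j hj
    have heq : (univ.filter fun j : Fin n => l ≤ (j:ℕ))
        = univ.filter fun j => l ≤ (σ j : ℕ) := by
      apply Finset.eq_of_subset_of_card_le hsub
      rw [card_filter_le_perm, card_filter_le_val]
    intro j hj
    by_contra hc
    have h1 : j ∈ univ.filter fun j => l ≤ (σ j : ℕ) := by
      simp only [mem_filter, mem_univ, true_and]
      omega
    rw [← heq] at h1
    simp only [mem_filter, mem_univ, true_and] at h1
    omega
  have hnpos : 0 < n := by omega
  have L5 : ∀ y w : Fin n, l ≤ (y:ℕ) → y < w → σ y < σ w := by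
    intro y w hy hyw
    by_contra hc
    have hne : σ w ≠ σ y := fun h => (ne_of_lt hyw) (σ.injective h).symm
    have h1 : σ w < σ y := lt_of_le_of_ne (not_lt.1 hc) hne
    have hz0v : ((⟨0, hnpos⟩ : Fin n) : ℕ) = 0 := rfl
    have h0 : (⟨0, hnpos⟩ : Fin n) < y := Fin.lt_def.2 (by omega)
    have hσ0 : (σ ⟨0, hnpos⟩ : ℕ) < l := L4 _ (by omega)
    have hσw : l ≤ (σ w : ℕ) := L3 w (by have := Fin.lt_def.1 hyw; omega)
    exact hσ ⟨⟨0, hnpos⟩, y, w, h0, hyw, Fin.lt_def.2 (by omega), h1⟩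
  intro i hi
  apply Fin.ext
  have h1 : (univ.filter fun j => σ j < σ i) = Finset.Iio i := by
    ext j
    simp only [mem_filter, mem_univ, true_and, Finset.mem_Iio]
    constructor
    · intro hσj
      by_contra hc
      rcases eq_or_lt_of_le (not_lt.1 hc) with h | h
      · rw [← h] at hσj; exact lt_irrefl _ hσj
      · exact absurd hσj (lt_asymm (L5 i j hi h))
    · intro hj
      rcases lt_or_ge (j:ℕ) l with h | h
      · have := L4 j h
        have := L3 i hi
        exact Fin.lt_def.2 (by omega)
      · exact L5 j i h hj
  have := card_val_lt σ i
  rw [h1, Fin.card_Iio] at this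
  omega

theorem mmp_of_fixes (hk : 1 ≤ k) (hl : 1 ≤ l) (hn : k + l + 1 ≤ n)
    (hfix : ∀ i : Fin n, l ≤ (i:ℕ) → σ i = i) : mmp k 0 l 0 σ = n - k - l := by
  have hlow : ∀ j : Fin n, (j:ℕ) < l → (σ j : ℕ) < l := by
    intro j hj
    by_contra hc
    have h1 : σ (σ j) = σ j := hfix (σ j) (not_lt.1 hc)
    have h2 := congrArg Fin.val (σ.injective h1)
    omega
  rw [mmp_eq_card]
  have hset : univ.filter (mmpMatch k 0 l 0 σ)
      = univ.filter fun i : Fin n => l ≤ (i:ℕ) ∧ (i:ℕ) < n - k := by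
    ext i
    simp only [mem_filter, mem_univ, true_and]
    constructor
    · intro h
      have := match_bounds h
      exact ⟨this.1, by omega⟩
    · rintro ⟨h1, h2⟩
      have hσi : σ i = i := hfix i h1
      refine ⟨?_, Nat.zero_le _, ?_, Nat.zero_le _⟩
      · have hsub : Finset.Ioi i ⊆ univ.filter fun j => i < j ∧ σ i < σ j := by
          intro j hj
          rw [Finset.mem_Ioi] at hj
          simp only [mem_filter, mem_univ, true_and]
          refine ⟨hj, ?_⟩
          have hσj : σ j = j := hfix j (by have := Fin.lt_def.1 hj; omega)
          rw [hσi, hσj]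
          exact hj
        have := Finset.card_le_card hsub
        rw [Fin.card_Ioi] at this
        have := i.isLt
        omega
      · have hsub : Finset.Iio i ⊆ univ.filter fun j => j < i ∧ σ j < σ i := by
          intro j hj
          rw [Finset.mem_Iio] at hj
          simp only [mem_filter, mem_univ, true_and]
          refine ⟨hj, ?_⟩
          have hji := Fin.lt_def.1 hj
          rcases lt_or_ge (j:ℕ) l with h | h
          · have := hlow j h
            have : (σ i : ℕ) = (i:ℕ) := congrArg Fin.val hσi
            apply Fin.lt_def.2
            have := hlow j (by omega)
            omega
          · have hσj : σ j = j := hfix j h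
            rw [hσi, hσj]
            exact hj
        have := Finset.card_le_card hsub
        rw [Fin.card_Iio] at this
        omega
  rw [hset, card_filter_interval l (n-k) n (by omega)]

end Main

section Ext
variable {l n : ℕ}

def ef (hln : l ≤ n) (τ : Perm (Fin l)) (j : Fin n) : Fin n :=
  if h : (j:ℕ) < l then ⟨(τ ⟨(j:ℕ), h⟩ : ℕ), by have := (τ ⟨(j:ℕ), h⟩).isLt; omega⟩ else j

lemma ef_lt (hln : l ≤ n) (τ : Perm (Fin l)) {j : Fin n} (h : (j:ℕ) < l) :
    (ef hln τ j : ℕ) = (τ ⟨(j:ℕ), h⟩ : ℕ) := by simp [ef, h]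

lemma ef_ge (hln : l ≤ n) (τ : Perm (Fin l)) {j : Fin n} (h : l ≤ (j:ℕ)) :
    ef hln τ j = j := by
  have h1 : ¬ ((j:ℕ) < l) := by omega
  simp [ef, h1]

lemma ef_inj (hln : l ≤ n) (τ : Perm (Fin l)) : Function.Injective (ef hln τ) := by
  intro a b hab
  have hval := congrArg Fin.val hab
  rcases lt_or_ge (a:ℕ) l with ha | ha <;> rcases lt_or_ge (b:ℕ) l with hb | hb
  · rw [ef_lt hln τ ha, ef_lt hln τ hb] at hval
    have := τ.injective (Fin.ext hval)
    rw [Fin.ext_iff] at this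
    exact Fin.ext this
  · rw [ef_lt hln τ ha, congrArg Fin.val (ef_ge hln τ hb)] at hval
    have := (τ ⟨(a:ℕ), ha⟩).isLt
    omega
  · rw [congrArg Fin.val (ef_ge hln τ ha), ef_lt hln τ hb] at hval
    have := (τ ⟨(b:ℕ), hb⟩).isLt
    omega
  · rw [ef_ge hln τ ha, ef_ge hln τ hb] at hab
    exact hab

noncomputable def extPerm (hln : l ≤ n) (τ : Perm (Fin l)) : Perm (Fin n) :=
  Equiv.ofBijective (ef hln τ) ((Finite.injective_iff_bijective).1 (ef_inj hln τ))

lemma extPerm_apply (hln : l ≤ n) (τ : Perm (Fin l)) (j : Fin n) :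
    extPerm hln τ j = ef hln τ j := rfl

lemma extPerm_fixes (hln : l ≤ n) (τ : Perm (Fin l)) {j : Fin n} (h : l ≤ (j:ℕ)) :
    extPerm hln τ j = j := ef_ge hln τ h

lemma extPerm_avoids (hln : l ≤ n) {τ : Perm (Fin l)} (hτ : avoids132 τ) :
    avoids132 (extPerm hln τ) := by
  rintro ⟨i, j, k, hij, hjk, h1, h2⟩
  rw [Fin.lt_def] at hij hjk h1 h2
  simp only [extPerm_apply] at h1 h2
  rcases lt_or_ge (k:ℕ) l with hk | hk
  · have hjl : (j:ℕ) < l := by omega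
    have hil : (i:ℕ) < l := by omega
    rw [ef_lt hln τ hil, ef_lt hln τ hk] at h1
    rw [ef_lt hln τ hk, ef_lt hln τ hjl] at h2
    exact hτ ⟨⟨(i:ℕ), hil⟩, ⟨(j:ℕ), hjl⟩, ⟨(k:ℕ), hk⟩, Fin.mk_lt_mk.2 hij,
      Fin.mk_lt_mk.2 hjk, Fin.lt_def.2 h1, Fin.lt_def.2 h2⟩
  · rw [congrArg Fin.val (ef_ge hln τ hk)] at h2
    rcases lt_or_ge (j:ℕ) l with hj | hj
    · rw [ef_lt hln τ hj] at h2
      have := (τ ⟨(j:ℕ), hj⟩).isLt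
      omega
    · rw [congrArg Fin.val (ef_ge hln τ hj)] at h2
      omega

end Ext

theorem count_max {n k l : ℕ} (hk : 1 ≤ k) (hl : 1 ≤ l) (hn : k + l + 1 ≤ n) :
    Nat.card {σ : Equiv.Perm (Fin n) // avoids132 σ ∧ mmp k 0 l 0 σ = n - k - l}
      = catalan l := by
  have hln : l ≤ n := by omega
  have hΨ : Function.Bijective (fun t : {τ : Perm (Fin l) // avoids132 τ} =>
      (⟨extPerm hln t.1, extPerm_avoids hln t.2,
        mmp_of_fixes hk hl hn (fun i hi => extPerm_fixes hln t.1 hi)⟩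
        : {σ : Equiv.Perm (Fin n) // avoids132 σ ∧ mmp k 0 l 0 σ = n - k - l})) := by
    constructor
    · rintro ⟨τ, hτ⟩ ⟨τ', hτ'⟩ h
      simp only [Subtype.mk.injEq] at h
      apply Subtype.ext
      apply Equiv.ext
      intro a
      have halt : (a:ℕ) < l := a.isLt
      have hval : (extPerm hln τ ⟨(a:ℕ), by omega⟩ : ℕ)
          = (extPerm hln τ' ⟨(a:ℕ), by omega⟩ : ℕ) := by rw [h]
      simp only [extPerm_apply] at hval
      rw [ef_lt hln τ halt, ef_lt hln τ' halt] at hval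
      simp only [Fin.eta] at hval
      exact Fin.ext hval
    · rintro ⟨σ, hav, hm⟩
      have hall := all_match hm hn
      have hfix := fixes_of_max hk hl hn hav hall
      have hlow : ∀ j : Fin n, (j:ℕ) < l → (σ j : ℕ) < l := by
        intro j hj
        by_contra hc
        have h1 : σ (σ j) = σ j := hfix (σ j) (not_lt.1 hc)
        have h2 := congrArg Fin.val (σ.injective h1)
        omega
      have hτinj : Function.Injective (fun a : Fin l =>
          (⟨(σ ⟨(a:ℕ), by have := a.isLt; omega⟩ : ℕ),
            hlow ⟨(a:ℕ), by have := a.isLt; omega⟩ a.isLt⟩ : Fin l)) := by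
        intro a b hab
        simp only [Fin.mk.injEq] at hab
        have h1 : σ ⟨(a:ℕ), by have := a.isLt; omega⟩ = σ ⟨(b:ℕ), by have := b.isLt; omega⟩ :=
          Fin.ext hab
        have h2 := congrArg Fin.val (σ.injective h1)
        exact Fin.ext h2
      obtain ⟨τ, hτspec⟩ : ∃ τ : Perm (Fin l), ∀ a : Fin l,
          (τ a : ℕ) = (σ ⟨(a:ℕ), by have := a.isLt; omega⟩ : ℕ) :=
        ⟨Equiv.ofBijective _ ((Finite.injective_iff_bijective).1 hτinj), fun a => rfl⟩
      have hτav : avoids132 τ := by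
        rintro ⟨a, b, c, hab, hbc, h1, h2⟩
        rw [Fin.lt_def] at hab hbc h1 h2
        rw [hτspec, hτspec] at h1 h2
        exact hav ⟨⟨(a:ℕ), by have := a.isLt; omega⟩, ⟨(b:ℕ), by have := b.isLt; omega⟩,
          ⟨(c:ℕ), by have := c.isLt; omega⟩, Fin.mk_lt_mk.2 hab, Fin.mk_lt_mk.2 hbc,
          Fin.lt_def.2 (by omega), Fin.lt_def.2 (by omega)⟩
      refine ⟨⟨τ, hτav⟩, ?_⟩
      apply Subtype.ext
      apply Equiv.ext
      intro j
      apply Fin.ext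
      rcases lt_or_ge (j:ℕ) l with hj | hj
      · show (ef hln τ j : ℕ) = (σ j : ℕ)
        rw [ef_lt hln τ hj, hτspec]
      · show (ef hln τ j : ℕ) = (σ j : ℕ)
        rw [ef_ge hln τ hj]
        exact (congrArg Fin.val (hfix j hj)).symm
  rw [← Nat.card_congr (Equiv.ofBijective _ hΨ), card_avoids132 l]


theorem stmt8 (k l n : ℕ) (hk : 1 ≤ k) (hl : 1 ≤ l) (hn : k + l + 1 ≤ n) :
    (∀ σ : Equiv.Perm (Fin n), avoids132 σ → mmp k 0 l 0 σ ≤ n - k - l) ∧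
    Nat.card {σ : Equiv.Perm (Fin n) // avoids132 σ ∧ mmp k 0 l 0 σ = n - k - l} =
      catalan l := by
  exact ⟨fun σ _ => mmp_le_max σ, count_max hk hl hn⟩
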